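/- arXiv:2506.03370 — 2 statements merged into one kernel-verified Lean document; each statement's English description precedes it below -/
import Mathlib

section
/- Let s : V × V → {0,1} ⊆ ℝ be any function on a set V, and define s̄((v,i,n),(w,j,n)) = (i - j - 1/2)·e^{3j}·(s(v,w) + 1/(4n·e^{3n})) for real i, j and integer n ≥ 1. Then for all 0 ≤ j < i ≤ n-1: (a) s̄((v,i,n),(w,j,n)) > 0; (b) if s(v,w) = 0 then s̄((v,i,n),(w,j,n)) < 1/3; (c) if s(v,w) = 1 then s̄((v,i,n),(w,j,n)) > 1/2. -/
/-- Properties of the modified attention function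
`s̄((v,i,n),(w,j,n)) = (i - j - 1/2)·e^{3j}·(s(v,w) + 1/(4n·e^{3n}))`
for `0 ≤ j < i ≤ n-1`: it is positive, below `1/3` when `s(v,w) = 0`, and
above `1/2` when `s(v,w) = 1`. -/
theorem modified_attention_values {V : Type*} (s : V → V → ℝ)
    (hs : ∀ v w, s v w = 0 ∨ s v w = 1)
    (n : ℕ) (hn : 1 ≤ n) (i j : ℕ) (hj : j < i) (hi : i ≤ n - 1)
    (v w : V) :
    (0 < ((i : ℝ) - (j : ℝ) - 1 / 2) * Real.exp (3 * j) *
        (s v w + 1 / (4 * n * Real.exp (3 * n)))) ∧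
    (s v w = 0 →
      ((i : ℝ) - (j : ℝ) - 1 / 2) * Real.exp (3 * j) *
        (s v w + 1 / (4 * n * Real.exp (3 * n))) < 1 / 3) ∧
    (s v w = 1 →
      1 / 2 < ((i : ℝ) - (j : ℝ) - 1 / 2) * Real.exp (3 * j) *
        (s v w + 1 / (4 * n * Real.exp (3 * n)))) := by
  have hij : (1:ℝ) ≤ (i:ℝ) - j := by
    have : (j:ℝ) + 1 ≤ i := by exact_mod_cast hj
    linarith
  have hin : (i:ℝ) ≤ (n:ℝ) - 1 := by
    have h : ((i:ℕ):ℝ) ≤ ((n-1:ℕ):ℝ) := Nat.cast_le.mpr hi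
    rwa [Nat.cast_sub hn, Nat.cast_one] at h
  have hn' : (1:ℝ) ≤ n := by exact_mod_cast hn
  have hE1 : 1 ≤ Real.exp (3 * j) := Real.one_le_exp (by positivity)
  have hjn : (j:ℝ) ≤ n := by
    have : j ≤ n := le_trans (le_of_lt hj) (le_trans hi (Nat.sub_le n 1))
    exact_mod_cast this
  have hEle : Real.exp (3 * j) ≤ Real.exp (3 * n) :=
    Real.exp_le_exp.mpr (by linarith)
  have hEn : 0 < Real.exp (3 * n) := Real.exp_pos _
  have hApos : 0 < (i:ℝ) - j - 1/2 := by linarith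
  have hεpos : 0 < 1 / (4 * n * Real.exp (3 * n)) := by positivity
  refine ⟨?_, ?_, ?_⟩
  · rcases hs v w with h | h <;> rw [h] <;> positivity
  · intro h
    rw [h]
    have h1 : ((i:ℝ) - j - 1/2) * Real.exp (3 * j) ≤ n * Real.exp (3 * n) := by
      have : ((i:ℝ) - j - 1/2) ≤ n := by linarith
      have hE0 : (0:ℝ) ≤ Real.exp (3 * j) := le_of_lt (Real.exp_pos _)
      nlinarith
    have h2 : ((i:ℝ) - j - 1/2) * Real.exp (3 * j) * (0 + 1 / (4 * n * Real.exp (3 * n)))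
        ≤ n * Real.exp (3 * n) * (1 / (4 * n * Real.exp (3 * n))) := by
      rw [zero_add]
      exact mul_le_mul_of_nonneg_right h1 hεpos.le
    have h3 : (n:ℝ) * Real.exp (3 * n) * (1 / (4 * n * Real.exp (3 * n))) = 1/4 := by
      field_simp
    linarith
  · intro h
    rw [h]
    have h5 : (1:ℝ)/2 ≤ ((i:ℝ) - j - 1/2) * Real.exp (3 * j) := by nlinarith
    have h6 : ((i:ℝ) - j - 1/2) * Real.exp (3 * j) * 1 <
        ((i:ℝ) - j - 1/2) * Real.exp (3 * j) * (1 + 1 / (4 * n * Real.exp (3 * n))) :=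
      mul_lt_mul_of_pos_left (by linarith) (by nlinarith)
    nlinarith
end

section
/- Let s : V × V → {0,1} and define s̄((v,i,n),(w,j,n)) = (i - j - 1/2)·e^{3j}·(s(v,w) + 1/(4n·e^{3n})). Fix v, i, n with i ≤ n-1. If j < j' < i and s(v,w) = s(v,w'), then s̄((v,i,n),(w,j,n)) < s̄((v,i,n),(w',j',n)). -/
/-- Monotonicity of the modified attention function: for `j < j' < i ≤ n-1`
and equal original scores `s(v,w) = s(v,w')`, the modified score at `j'` is
strictly larger than at `j`. -/
theorem modified_attention_strict_mono {V : Type*} (s : V → V → ℝ)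
    (hs : ∀ v w, s v w = 0 ∨ s v w = 1)
    (n : ℕ) (hn : 1 ≤ n) (i j j' : ℕ) (hi : i ≤ n - 1)
    (hjn : j < n) (hj'n : j' < n)
    (hjj' : j < j') (hj'i : j' < i)
    (v w w' : V) (hvw : s v w = s v w') :
    ((i : ℝ) - (j : ℝ) - 1 / 2) * Real.exp (3 * j) *
      (s v w + 1 / (4 * n * Real.exp (3 * n))) <
    ((i : ℝ) - (j' : ℝ) - 1 / 2) * Real.exp (3 * j') *
      (s v w' + 1 / (4 * n * Real.exp (3 * n))) := by
  rw [hvw]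
  have hc : 0 < s v w' + 1 / (4 * n * Real.exp (3 * n)) := by
    have h1 : 0 ≤ s v w' := by rcases hs v w' with h | h <;> simp [h]
    have h2 : 0 < 1 / (4 * n * Real.exp (3 * n)) := by
      apply div_pos one_pos
      positivity
    linarith
  apply mul_lt_mul_of_pos_right _ hc
  -- main inequality
  have ha : (1:ℝ)/2 ≤ (i : ℝ) - (j' : ℝ) - 1 / 2 := by
    have : (j' : ℝ) + 1 ≤ i := by exact_mod_cast hj'i
    linarith
  have hd : (1:ℝ) ≤ (j' : ℝ) - j := by
    have : (j : ℝ) + 1 ≤ j' := by exact_mod_cast hjj'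
    linarith
  have hE : 1 + 3 * ((j' : ℝ) - j) < Real.exp (3 * ((j' : ℝ) - j)) := by
    have := Real.add_one_lt_exp (x := 3 * ((j' : ℝ) - j)) (by nlinarith)
    linarith
  have hsplit : Real.exp (3 * (j' : ℝ)) =
      Real.exp (3 * (j : ℝ)) * Real.exp (3 * ((j' : ℝ) - j)) := by
    rw [← Real.exp_add]; ring_nf
  rw [hsplit]
  have hej : 0 < Real.exp (3 * (j : ℝ)) := Real.exp_pos _
  have ha' : (0:ℝ) < (i : ℝ) - (j' : ℝ) - 1 / 2 := by linarith
  have key : ((i : ℝ) - (j : ℝ) - 1 / 2) <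
      ((i : ℝ) - (j' : ℝ) - 1 / 2) * Real.exp (3 * ((j' : ℝ) - j)) := by
    nlinarith [mul_lt_mul_of_pos_left hE ha']
  calc ((i : ℝ) - (j : ℝ) - 1 / 2) * Real.exp (3 * (j : ℝ))
      < (((i : ℝ) - (j' : ℝ) - 1 / 2) * Real.exp (3 * ((j' : ℝ) - j))) *
        Real.exp (3 * (j : ℝ)) := mul_lt_mul_of_pos_right key hej
    _ = ((i : ℝ) - (j' : ℝ) - 1 / 2) *
        (Real.exp (3 * (j : ℝ)) * Real.exp (3 * ((j' : ℝ) - j))) := by ring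
end
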